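/- Let p > 3 be prime and write s = 1 + n(p-1)p^t with t ≥ 0 and n ≥ 0. Then Σ_{0≤j≤s, j≡1 mod (p-1)} C(s,j) ≡ 1 + n·p^{t+1} (mod p^{t+2}). -/
import Mathlib


-- (1+z)^p ≡ 1 + p z  mod p^(r+2), when p^r ∣ z, r ≥ 1, p odd prime (p>3 here)
lemma aux_pow_p (p r : ℕ) (hp : p.Prime) (hp3 : 3 < p) (hr : 1 ≤ r) (z : ℤ)
    (hz : (p:ℤ)^r ∣ z) : (p:ℤ)^(r+2) ∣ (1+z)^p - 1 - p*z := by
  have hppos : 1 ≤ p := hp.one_lt.le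
  have hexp : (1+z)^p = ∑ k ∈ Finset.range (p+1), z^k * 1^(p-k) * (p.choose k : ℤ) := by
    rw [add_comm (1:ℤ) z]; exact add_pow z 1 p
  have hsplit := Finset.sum_range_add_sum_Ico
    (fun k => z^k * 1^(p-k) * (p.choose k : ℤ)) (by omega : 2 ≤ p+1)
  have h01 : ∑ k ∈ Finset.range 2, z^k * 1^(p-k) * (p.choose k : ℤ) = 1 + p*z := by
    rw [Finset.sum_range_succ, Finset.sum_range_one]
    simp [Nat.choose_one_right]
    ring
  have : (1+z)^p - 1 - p*z = ∑ k ∈ Finset.Ico 2 (p+1), z^k * 1^(p-k) * (p.choose k : ℤ) := by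
    rw [hexp, ← hsplit, h01]; ring
  rw [this]
  apply Finset.dvd_sum
  intro k hk
  simp only [Finset.mem_Ico] at hk
  rcases eq_or_lt_of_le (Nat.lt_succ_iff.mp hk.2) with hkp | hkp
  · -- k = p
    have h1 : ((p:ℤ)^r)^p ∣ z^p := pow_dvd_pow_of_dvd hz p
    rw [← pow_mul] at h1
    have h2 : (p:ℤ)^(r+2) ∣ (p:ℤ)^(r*p) := pow_dvd_pow _ (by nlinarith)
    subst hkp
    exact dvd_mul_of_dvd_left (dvd_mul_of_dvd_left (h2.trans h1) _) _
  · -- 2 ≤ k < p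
    have hc : (p:ℤ) ∣ (p.choose k : ℤ) := by
      exact_mod_cast Int.natCast_dvd_natCast.mpr (hp.dvd_choose_self (by omega) hkp)
    have h1 : ((p:ℤ)^r)^2 ∣ z^k :=
      dvd_trans (pow_dvd_pow_of_dvd hz 2) (pow_dvd_pow z hk.1)
    rw [← pow_mul] at h1
    have h2 : (p:ℤ)^(r+1) ∣ (p:ℤ)^(r*2) := pow_dvd_pow _ (by omega)
    have : (p:ℤ)^(r+2) ∣ z^k * (p:ℤ) := by
      rw [pow_succ]
      exact mul_dvd_mul (h2.trans h1) dvd_rfl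
    calc (p:ℤ)^(r+2) ∣ z^k * (p:ℤ) := this
      _ ∣ z ^ k * 1 ^ (p - k) * (p.choose k : ℤ) := by
          rw [one_pow, mul_one]
          exact mul_dvd_mul_left _ hc

lemma aux_pow_pt (p : ℕ) (hp : p.Prime) (hp3 : 3 < p) (t : ℕ) (x : ℤ)
    (hx : (p:ℤ) ∣ x) : (p:ℤ)^(t+2) ∣ (1+x)^(p^t) - (1 + (p:ℤ)^t * x) := by
  induction t with
  | zero => simp
  | succ t ih =>
    obtain ⟨y, hy⟩ := ih
    set z : ℤ := (p:ℤ)^t * x + (p:ℤ)^(t+2) * y with hzdef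
    have hz1 : (1+x)^(p^t) = 1 + z := by rw [hzdef]; linarith [hy]
    have hzd : (p:ℤ)^(t+1) ∣ z := by
      apply dvd_add
      · rw [pow_succ]; exact mul_dvd_mul_left _ hx
      · exact Dvd.dvd.mul_right (pow_dvd_pow _ (by omega)) _
    have key := aux_pow_p p (t+1) hp hp3 (by omega) z hzd
    have h1 : (1+x)^(p^(t+1)) = (1+z)^p := by
      rw [pow_succ, pow_mul, hz1]
    obtain ⟨w, hw⟩ := key
    have : (1+x)^(p^(t+1)) - (1 + (p:ℤ)^(t+1) * x)
        = (p:ℤ)^(t+1+2) * w + (p:ℤ)^(t+3) * y := by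
      rw [h1]
      have : (1+z)^p = 1 + p*z + (p:ℤ)^(t+1+2) * w := by linarith [hw]
      rw [this, hzdef]
      ring
    rw [this]
    exact dvd_add ⟨w, rfl⟩ (Dvd.dvd.mul_right (pow_dvd_pow _ (by omega)) _)

lemma nil_pow {R : Type*} [CommRing R] (d : R) (hd : d * d = 0) (n : ℕ) :
    (1 + d)^n = 1 + n * d := by
  induction n with
  | zero => simp
  | succ n ih =>
    rw [pow_succ, ih]
    have h2 : d^2 = 0 := by rw [pow_two]; exact hd
    push_cast
    ring_nf
    rw [h2]
    ring

lemma coprime_pred (p : ℕ) (hp : p.Prime) : Nat.Coprime (p - 1) p := by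
  refine Nat.Coprime.symm ((hp.coprime_iff_not_dvd).mpr ?_)
  intro h
  have h1 : 0 < p - 1 := by have := hp.two_le; omega
  have := Nat.le_of_dvd h1 h
  omega




section zmod

lemma ne_zero_q (p t : ℕ) (hp : p.Prime) : NeZero (p^(t+2)) :=
  ⟨pow_ne_zero _ hp.ne_zero⟩

-- unit lifting
lemma isUnit_of_pi_ne (p t : ℕ) (hp : p.Prime) (x : ZMod (p^(t+2)))
    (hx : ZMod.castHom (dvd_pow_self p (by omega : t+2 ≠ 0)) (ZMod p) x ≠ 0) :
    IsUnit x := by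
  haveI := ne_zero_q p t hp
  rw [ZMod.castHom_apply, ← ZMod.natCast_val] at hx
  have hnd : ¬ p ∣ x.val := fun h => hx ((ZMod.natCast_eq_zero_iff _ _).mpr h)
  have hcop : Nat.Coprime (x.val) (p^(t+2)) :=
    Nat.Coprime.pow_right _ (((hp.coprime_iff_not_dvd).mpr hnd).symm)
  have := (ZMod.isUnit_iff_coprime x.val (p^(t+2))).mpr hcop
  rwa [ZMod.natCast_rightInverse x] at this

-- an element congruent to 1 mod p whose (p-1)-st power is 1, equals 1
lemma root_eq_one (p t : ℕ) (hp : p.Prime) (hp3 : 3 < p) (h : ZMod (p^(t+2)))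
    (h1 : ZMod.castHom (dvd_pow_self p (by omega : t+2 ≠ 0)) (ZMod p) h = 1)
    (h2 : h^(p-1) = 1) : h = 1 := by
  haveI := ne_zero_q p t hp
  set x : ℤ := (h.val : ℤ) - 1 with hxdef
  have hpx : (p:ℤ) ∣ x := by
    rw [← ZMod.intCast_zmod_eq_zero_iff_dvd]
    rw [ZMod.castHom_apply, ← ZMod.natCast_val] at h1
    push_cast [hxdef]
    rw [h1]; ring
  have hd := aux_pow_pt p hp hp3 (t+1) x hpx
  have hcast : ((h.val : ℕ) : ZMod (p^(t+2))) = h := ZMod.natCast_rightInverse h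
  have h3 : h ^ (p^(t+1)) = 1 + (p:ZMod (p^(t+2)))^(t+1) * (x : ZMod (p^(t+2))) := by
    have : (1 + x) = (h.val : ℤ) := by rw [hxdef]; ring
    have hc2 : (((1+x)^(p^(t+1)) - (1 + (p:ℤ)^(t+1) * x) : ℤ) : ZMod (p^(t+2))) = 0 := by
      rw [ZMod.intCast_zmod_eq_zero_iff_dvd]
      refine dvd_trans ?_ hd
      push_cast
      exact pow_dvd_pow _ (by omega)
    have hc2' : (((1+x)^(p^(t+1)) : ℤ) : ZMod (p^(t+2)))
        = (((1 + (p:ℤ)^(t+1) * x) : ℤ) : ZMod (p^(t+2))) := by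
      rw [← sub_eq_zero, ← Int.cast_sub]; exact hc2
    calc h ^ (p^(t+1)) = (((1+x)^(p^(t+1)) : ℤ) : ZMod (p^(t+2))) := by
          push_cast [this]; rw [hcast]
      _ = (((1 + (p:ℤ)^(t+1) * x) : ℤ) : ZMod (p^(t+2))) := hc2'
      _ = 1 + (p:ZMod (p^(t+2)))^(t+1) * (x : ZMod (p^(t+2))) := by push_cast; ring
  have h4 : (p:ZMod (p^(t+2)))^(t+1) * (x : ZMod (p^(t+2))) = 0 := by
    obtain ⟨c, hc⟩ := hpx
    have : ((p:ℤ)^(t+1) * x : ℤ) = (p:ℤ)^(t+2) * c := by rw [hc]; ring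
    calc (p:ZMod (p^(t+2)))^(t+1) * (x : ZMod (p^(t+2)))
        = (((p:ℤ)^(t+1) * x : ℤ) : ZMod (p^(t+2))) := by push_cast; ring
      _ = 0 := by
          rw [ZMod.intCast_zmod_eq_zero_iff_dvd, this]
          exact Dvd.intro c (by push_cast; ring)
  rw [h4, add_zero] at h3
  -- now h^(p^(t+1)) = 1 and h^(p-1) = 1, coprime orders
  have d1 : orderOf h ∣ p - 1 := orderOf_dvd_of_pow_eq_one h2
  have d2 : orderOf h ∣ p^(t+1) := orderOf_dvd_of_pow_eq_one h3
  have hcop : Nat.Coprime (p-1) (p^(t+1)) := by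
    refine Nat.Coprime.pow_right _ ?_
    refine Nat.Coprime.symm ((hp.coprime_iff_not_dvd).mpr ?_)
    intro hd'
    have h1' : 0 < p - 1 := by have := hp.two_le; omega
    have := Nat.le_of_dvd h1' hd'
    omega
  have hdg := Nat.dvd_gcd d1 d2
  rw [Nat.Coprime] at hcop
  rw [hcop, Nat.dvd_one] at hdg
  exact orderOf_eq_one_iff.mp hdg

end zmod

lemma nil_pow' {R : Type*} [CommRing R] (d : R) (hd : d * d = 0) (n : ℕ) :
    (1 + d)^n = 1 + n * d := by
  induction n with
  | zero => simp
  | succ n ih =>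
    rw [pow_succ, ih]
    have h2 : d^2 = 0 := by rw [pow_two]; exact hd
    push_cast
    ring_nf
    rw [h2]
    ring

lemma key_lemma (p n t : ℕ) (hp : p.Prime) (hp3 : 3 < p)
    (u : ZMod (p^(t+2))) (hu : IsUnit u ∨ u = 0) :
    u ^ (1 + n * (p-1) * p^t)
      = u + (n : ZMod (p^(t+2))) * ((p : ZMod (p^(t+2)))^t * (u^p - u)) := by
  haveI := ne_zero_q p t hp
  haveI : Fact p.Prime := ⟨hp⟩
  rcases hu with hu | rfl
  · -- unit case
    have hcast : ((u.val : ℕ) : ZMod (p^(t+2))) = u := ZMod.natCast_rightInverse u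
    set x : ℤ := (u.val : ℤ)^(p-1) - 1 with hxdef
    have hpx : (p:ℤ) ∣ x := by
      rw [← ZMod.intCast_zmod_eq_zero_iff_dvd]
      have hv : ((u.val : ℕ) : ZMod p) ≠ 0 := by
        intro h0
        have hd := (ZMod.natCast_eq_zero_iff _ _).mp h0
        have hiu : IsUnit ((u.val : ℕ) : ZMod (p^(t+2))) := by rw [hcast]; exact hu
        have hcop2 := (ZMod.isUnit_iff_coprime u.val (p^(t+2))).mp hiu
        have hg : p ∣ Nat.gcd u.val (p^(t+2)) :=
          Nat.dvd_gcd hd (dvd_pow_self p (by omega))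
        rw [hcop2] at hg
        have := Nat.le_of_dvd one_pos hg
        omega
      have hfermat : ((u.val : ℕ) : ZMod p)^(p-1) = 1 :=
        ZMod.pow_card_sub_one_eq_one hv
      push_cast [hxdef]
      rw [hfermat]; ring
    have hd := aux_pow_pt p hp hp3 t x hpx
    set D : ZMod (p^(t+2)) := (p:ZMod (p^(t+2)))^t * (u^(p-1) - 1) with hDdef
    have hDcast : (((p:ℤ)^t * x : ℤ) : ZMod (p^(t+2))) = D := by
      push_cast [hxdef, hDdef, hcast]
      ring
    have h1x : ((1 + x : ℤ) : ZMod (p^(t+2))) = u^(p-1) := by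
      push_cast [hxdef, hcast]; ring
    have hstep : u ^ ((p-1) * p^t) = 1 + D := by
      have hc2 : (((1+x)^(p^t) : ℤ) : ZMod (p^(t+2)))
          = ((1 + (p:ℤ)^t * x : ℤ) : ZMod (p^(t+2))) := by
        rw [← sub_eq_zero, ← Int.cast_sub, ZMod.intCast_zmod_eq_zero_iff_dvd]
        refine dvd_trans (by push_cast; rfl) hd
      calc u ^ ((p-1) * p^t) = (u^(p-1))^(p^t) := by rw [pow_mul]
        _ = (((1+x) : ℤ) : ZMod (p^(t+2)))^(p^t) := by rw [h1x]
        _ = (((1+x)^(p^t) : ℤ) : ZMod (p^(t+2))) := by push_cast; ring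
        _ = ((1 + (p:ℤ)^t * x : ℤ) : ZMod (p^(t+2))) := hc2
        _ = 1 + D := by rw [Int.cast_add, Int.cast_one, hDcast]
    have hD2 : D * D = 0 := by
      obtain ⟨c, hc⟩ := hpx
      have hint : ((p:ℤ)^t * x) * ((p:ℤ)^t * x) = (p:ℤ)^(t+2) * ((p:ℤ)^t * (c * c)) := by
        rw [hc]; ring
      calc D * D = ((((p:ℤ)^t * x) * ((p:ℤ)^t * x) : ℤ) : ZMod (p^(t+2))) := by
            rw [Int.cast_mul, hDcast]
        _ = 0 := by
            rw [hint, ZMod.intCast_zmod_eq_zero_iff_dvd]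
            push_cast
            exact dvd_mul_right _ _
    have hud : u * D = (p:ZMod (p^(t+2)))^t * (u^p - u) := by
      have hup : u * u^(p-1) = u^p := by
        rw [← pow_succ']
        congr 1
        omega
      rw [hDdef, ← hup]
      ring
    calc u ^ (1 + n * (p-1) * p^t)
        = u * (u ^ ((p-1) * p^t))^n := by
          rw [← pow_mul, ← pow_succ']
          congr 1
          ring
      _ = u * (1 + D)^n := by rw [hstep]
      _ = u * (1 + n * D) := by rw [nil_pow' D hD2]
      _ = u + (n : ZMod (p^(t+2))) * (u * D) := by ring
      _ = u + (n : ZMod (p^(t+2))) * ((p : ZMod (p^(t+2)))^t * (u^p - u)) := by rw [hud]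
  · -- zero case
    rw [zero_pow (by positivity), zero_pow hp.ne_zero]
    simp

lemma exists_g (p t : ℕ) (hp : p.Prime) (hp3 : 3 < p) :
    ∃ g : ZMod (p^(t+2)),
      g^(p-1) = 1 ∧ (∀ j, ¬ ((p-1) ∣ j) → IsUnit (g^j - 1)) ∧
      (∀ k, IsUnit (1 + g^k) ∨ 1 + g^k = 0) := by
  haveI := ne_zero_q p t hp
  haveI : Fact p.Prime := ⟨hp⟩
  have hdvd : p ∣ p^(t+2) := dvd_pow_self p (by omega)
  set π := ZMod.castHom hdvd (ZMod p) with hπ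
  obtain ⟨b, hb⟩ := IsCyclic.exists_generator (α := (ZMod p)ˣ)
  have hob : orderOf b = p - 1 := by
    rw [orderOf_eq_card_of_forall_mem_zpowers hb, Nat.card_eq_fintype_card,
      ZMod.card_units]
  obtain ⟨B, hB⟩ := ZMod.unitsMap_surjective hdvd b
  set g : ZMod (p^(t+2)) := (B : ZMod (p^(t+2)))^(p^(t+1)) with hgdef
  -- π (B) = b
  have hπB : π ((B : ZMod (p^(t+2)))) = (b : ZMod p) := by
    rw [← hB, ZMod.unitsMap_def]
    rfl
  -- b ^ (p^(t+1)) = b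
  have hbp : b ^ (p^(t+1)) = b := by
    have h1 : (p-1) ∣ p^(t+1) - 1^(t+1) := Nat.sub_dvd_pow_sub_pow p 1 (t+1)
    rw [one_pow] at h1
    have h2 : p^(t+1) % (p-1) = 1 := by
      have h3 : (1 : ℕ) ≡ p^(t+1) [MOD (p-1)] :=
        (Nat.modEq_iff_dvd' (Nat.one_le_pow _ _ hp.pos)).mpr h1
      have h4 : p^(t+1) % (p-1) = 1 % (p-1) := h3.symm
      rw [h4]
      exact Nat.mod_eq_of_lt (by omega)
    rw [← pow_mod_orderOf, hob, h2, pow_one]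
  have hπg : π g = (b : ZMod p) := by
    rw [hgdef, map_pow, hπB, ← Units.val_pow_eq_pow_val, hbp]
  -- g ^ (p-1) = 1
  have hcard : Fintype.card (ZMod (p^(t+2)))ˣ = p^(t+1) * (p-1) := by
    rw [ZMod.card_units_eq_totient, Nat.totient_prime_pow hp (by omega)]
    congr 1
  have hg1 : g^(p-1) = 1 := by
    have : B ^ (p^(t+1) * (p-1)) = 1 := by
      rw [← hcard]; exact pow_card_eq_one
    rw [hgdef, ← pow_mul]
    calc ((B : ZMod (p^(t+2))))^(p^(t+1) * (p-1))
        = ((B ^ (p^(t+1) * (p-1)) : (ZMod (p^(t+2)))ˣ) : ZMod (p^(t+2))) := by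
          rw [Units.val_pow_eq_pow_val]
      _ = 1 := by rw [this]; rfl
  -- unit lemma
  have hgu : ∀ j, ¬ ((p-1) ∣ j) → IsUnit (g^j - 1) := by
    intro j hj
    apply isUnit_of_pi_ne p t hp
    rw [map_sub, map_pow, map_one, hπg]
    intro h0
    have hbj : (b : ZMod p)^j = 1 := by
      have := sub_eq_zero.mp h0
      exact this
    have : b ^ j = 1 := by
      ext
      rw [Units.val_pow_eq_pow_val, hbj]; rfl
    have := orderOf_dvd_of_pow_eq_one this
    rw [hob] at this
    exact hj this
  refine ⟨g, hg1, hgu, ?_⟩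
  intro k
  by_cases hk : π (1 + g^k) = 0
  · right
    have hπgk : π (g^k) = -1 := by
      have := hk
      rw [map_add, map_one, map_pow, hπg] at this
      have h2 : (b : ZMod p)^k = -1 := by linear_combination this
      rw [map_pow, hπg, h2]
    have hneg : π (-(g^k)) = 1 := by rw [map_neg, hπgk]; ring
    have hpow : (-(g^k))^(p-1) = 1 := by
      have hpodd : Odd p := hp.odd_of_ne_two (by omega)
      have heven : Even (p-1) := Nat.Odd.sub_odd hpodd odd_one
      rw [neg_pow, heven.neg_one_pow, one_mul, ← pow_mul, mul_comm, pow_mul, hg1,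
        one_pow]
    have := root_eq_one p t hp hp3 (-(g^k)) hneg hpow
    have : g^k = -1 := by linear_combination -this
    rw [this]; ring
  · left
    exact isUnit_of_pi_ne p t hp _ hk

lemma modcond (m j : ℕ) (hm : 2 ≤ m) : m ∣ (m - 1 + j) ↔ j % m = 1 % m := by
  show _ ↔ Nat.ModEq m j 1
  constructor
  · intro h
    have h2 : m - 1 + j + 1 ≡ 0 + 1 [MOD m] :=
      Nat.ModEq.add_right 1 ((Nat.modEq_zero_iff_dvd).mpr h)
    have h3 : m - 1 + j + 1 = j + m := by omega
    rw [h3] at h2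
    have h4 : j + m ≡ j + 0 [MOD m] :=
      Nat.ModEq.add_left j ((Nat.modEq_zero_iff_dvd).mpr dvd_rfl)
    have := h4.symm.trans h2
    simpa using this
  · intro h
    have h2 : m - 1 + j ≡ m - 1 + 1 [MOD m] := Nat.ModEq.add_left _ h
    have h3 : m - 1 + 1 = m := by omega
    rw [h3] at h2
    have h5 : m ≡ 0 [MOD m] := (Nat.modEq_zero_iff_dvd).mpr dvd_rfl
    exact (Nat.modEq_zero_iff_dvd).mp (h2.trans h5)

lemma ortho (p t : ℕ) (hp : p.Prime) (hp3 : 3 < p) (g : ZMod (p^(t+2)))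
    (hg1 : g^(p-1) = 1) (hgu : ∀ j, ¬ ((p-1) ∣ j) → IsUnit (g^j - 1)) (j : ℕ) :
    ∑ k ∈ Finset.range (p-1), (g^j)^k
      = if (p-1) ∣ j then ((p-1 : ℕ) : ZMod (p^(t+2))) else 0 := by
  split_ifs with h
  · obtain ⟨c, rfl⟩ := h
    have hone : g^((p-1)*c) = 1 := by rw [pow_mul, hg1, one_pow]
    rw [hone]
    simp
  · have h0 : (∑ k ∈ Finset.range (p-1), (g^j)^k) * (g^j - 1) = 0 := by
      rw [geom_sum_mul, ← pow_mul, mul_comm, pow_mul, hg1, one_pow, sub_self]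
    exact (hgu j h).mul_right_cancel (by rw [h0, zero_mul])

lemma expand_sum (p t : ℕ) (hp : p.Prime) (hp3 : 3 < p) (g : ZMod (p^(t+2)))
    (hg1 : g^(p-1) = 1) (hgu : ∀ j, ¬ ((p-1) ∣ j) → IsUnit (g^j - 1)) (e : ℕ) :
    ∑ k ∈ Finset.range (p-1), g^(k*(p-1-1)) * (1+g^k)^e
      = ((p-1 : ℕ) : ZMod (p^(t+2))) *
        ∑ j ∈ (Finset.range (e+1)).filter (fun j => j % (p-1) = 1 % (p-1)),
          (e.choose j : ZMod (p^(t+2))) := by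
  have hm2 : 2 ≤ p - 1 := by omega
  calc ∑ k ∈ Finset.range (p-1), g^(k*(p-1-1)) * (1+g^k)^e
      = ∑ k ∈ Finset.range (p-1), ∑ j ∈ Finset.range (e+1),
          (e.choose j : ZMod (p^(t+2))) * (g^(p-1-1+j))^k := by
        refine Finset.sum_congr rfl (fun k _ => ?_)
        rw [add_comm (1 : ZMod (p^(t+2))) (g^k), add_pow, Finset.mul_sum]
        refine Finset.sum_congr rfl (fun j _ => ?_)
        have hexp : k * (p-1-1) + k * j = (p-1-1+j)*k := by ring
        rw [one_pow, mul_one, ← pow_mul, ← mul_assoc, ← pow_add, hexp, mul_comm,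
          pow_mul]
    _ = ∑ j ∈ Finset.range (e+1), (e.choose j : ZMod (p^(t+2))) *
          ∑ k ∈ Finset.range (p-1), (g^(p-1-1+j))^k := by
        rw [Finset.sum_comm]
        exact Finset.sum_congr rfl (fun j _ => by rw [Finset.mul_sum])
    _ = ∑ j ∈ Finset.range (e+1), (e.choose j : ZMod (p^(t+2))) *
          (if (p-1) ∣ (p-1-1+j) then ((p-1 : ℕ) : ZMod (p^(t+2))) else 0) := by
        exact Finset.sum_congr rfl (fun j _ => by rw [ortho p t hp hp3 g hg1 hgu])
    _ = ∑ j ∈ Finset.range (e+1),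
          (if j % (p-1) = 1 % (p-1) then
            ((p-1 : ℕ) : ZMod (p^(t+2))) * (e.choose j : ZMod (p^(t+2))) else 0) := by
        refine Finset.sum_congr rfl (fun j _ => ?_)
        by_cases hc : (p-1) ∣ (p-1-1+j)
        · rw [if_pos hc, if_pos ((modcond _ _ hm2).mp hc)]; ring
        · rw [if_neg hc, if_neg (fun hh => hc ((modcond _ _ hm2).mpr hh)), mul_zero]
    _ = ((p-1 : ℕ) : ZMod (p^(t+2))) *
        ∑ j ∈ (Finset.range (e+1)).filter (fun j => j % (p-1) = 1 % (p-1)),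
          (e.choose j : ZMod (p^(t+2))) := by
        rw [Finset.mul_sum, Finset.sum_filter]

lemma main_zmod (p n t : ℕ) (hp : p.Prime) (hp3 : 3 < p) :
    (∑ j ∈ (Finset.range (1 + n*(p-1)*p^t + 1)).filter
        (fun j => j % (p-1) = 1 % (p-1)),
      ((1 + n*(p-1)*p^t).choose j : ZMod (p^(t+2))))
      = 1 + (n : ZMod (p^(t+2))) * (p : ZMod (p^(t+2)))^(t+1) := by
  haveI := ne_zero_q p t hp
  haveI : Fact p.Prime := ⟨hp⟩
  obtain ⟨g, hg1, hgu, h1g⟩ := exists_g p t hp hp3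
  have hm2 : 2 ≤ p - 1 := by omega
  set S : ZMod (p^(t+2)) := ∑ j ∈ (Finset.range (1 + n*(p-1)*p^t + 1)).filter
        (fun j => j % (p-1) = 1 % (p-1)),
      ((1 + n*(p-1)*p^t).choose j : ZMod (p^(t+2))) with hS
  set A : ZMod (p^(t+2)) := ∑ k ∈ Finset.range (p-1), g^(k*(p-1-1)) * (1+g^k) with hA
  set C : ZMod (p^(t+2)) := ∑ k ∈ Finset.range (p-1), g^(k*(p-1-1)) * (1+g^k)^p with hC
  -- Step 1
  have step1 : ∑ k ∈ Finset.range (p-1), g^(k*(p-1-1)) * (1+g^k)^(1 + n*(p-1)*p^t)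
      = ((p-1 : ℕ) : ZMod (p^(t+2))) * S :=
    expand_sum p t hp hp3 g hg1 hgu (1 + n*(p-1)*p^t)
  -- Step 2
  have step2 : ∑ k ∈ Finset.range (p-1), g^(k*(p-1-1)) * (1+g^k)^(1 + n*(p-1)*p^t)
      = A + (n : ZMod (p^(t+2))) * ((p : ZMod (p^(t+2)))^t * (C - A)) := by
    have hterm : ∀ k ∈ Finset.range (p-1),
        g^(k*(p-1-1)) * (1+g^k)^(1 + n*(p-1)*p^t)
        = g^(k*(p-1-1)) * (1+g^k)
          + (n : ZMod (p^(t+2))) * ((p : ZMod (p^(t+2)))^t * (g^(k*(p-1-1)) * (1+g^k)^p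
              - g^(k*(p-1-1)) * (1+g^k))) := by
      intro k _
      rw [key_lemma p n t hp hp3 (1+g^k) (h1g k)]
      ring
    rw [Finset.sum_congr rfl hterm, Finset.sum_add_distrib, ← Finset.mul_sum,
      ← Finset.mul_sum, Finset.sum_sub_distrib]
  -- A = p - 1
  have hAval : A = ((p-1 : ℕ) : ZMod (p^(t+2))) := by
    have hterm : ∀ k ∈ Finset.range (p-1),
        g^(k*(p-1-1)) * (1+g^k) = (g^(p-1-1))^k + (g^(p-1))^k := by
      intro k _
      have h1 : k*(p-1-1) + k = (p-1)*k := by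
        have h2 : p - 1 - 1 + 1 = p - 1 := by omega
        calc k*(p-1-1) + k = ((p-1-1)+1)*k := by ring
          _ = (p-1)*k := by rw [h2]
      have e2 : g^(k*(p-1-1)) * g^k = (g^(p-1))^k := by rw [← pow_add, h1, pow_mul]
      have e1 : g^(k*(p-1-1)) = (g^(p-1-1))^k := by rw [mul_comm, pow_mul]
      rw [mul_add, mul_one, e2, e1]
    rw [hA, Finset.sum_congr rfl hterm, Finset.sum_add_distrib,
      ortho p t hp hp3 g hg1 hgu, ortho p t hp hp3 g hg1 hgu]
    rw [if_neg, if_pos dvd_rfl, zero_add]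
    intro hdvd
    have := Nat.le_of_dvd (by omega) hdvd
    omega
  -- C = (p-1) * (p + 1)
  have hfs : ∑ j ∈ (Finset.range (p+1)).filter (fun j => j % (p-1) = 1 % (p-1)),
      (p.choose j : ZMod (p^(t+2))) = (p : ZMod (p^(t+2))) + 1 := by
    rw [Finset.sum_filter, Finset.sum_range_succ]
    have h1m : 1 % (p-1) = 1 := Nat.mod_eq_of_lt (by omega)
    have hpc : p % (p-1) = 1 % (p-1) := by
      conv_lhs => rw [show p = (p-1)+1 by omega]
      exact Nat.add_mod_left _ _
    rw [if_pos hpc, Nat.choose_self]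
    have hmain : ∑ j ∈ Finset.range p,
        (if j % (p-1) = 1 % (p-1) then (p.choose j : ZMod (p^(t+2))) else 0)
        = (p : ZMod (p^(t+2))) := by
      rw [Finset.sum_eq_single_of_mem 1 (Finset.mem_range.mpr (by omega))]
      · rw [if_pos rfl, Nat.choose_one_right]
      · intro j hj hne
        rw [Finset.mem_range] at hj
        rw [if_neg]
        by_cases hjm : j < p - 1
        · rw [Nat.mod_eq_of_lt hjm, h1m]; exact hne
        · have hje : j = p - 1 := by omega
          rw [hje, Nat.mod_self, h1m]
          omega
    rw [hmain, Nat.cast_one]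
  have hCval : C = ((p-1 : ℕ) : ZMod (p^(t+2))) * ((p : ZMod (p^(t+2))) + 1) := by
    rw [hC, expand_sum p t hp hp3 g hg1 hgu p, hfs]
  -- combine
  have hcomb : ((p-1 : ℕ) : ZMod (p^(t+2))) * S
      = ((p-1 : ℕ) : ZMod (p^(t+2)))
        * (1 + (n : ZMod (p^(t+2))) * (p : ZMod (p^(t+2)))^(t+1)) := by
    rw [← step1, step2, hAval, hCval]
    ring
  have hmu : IsUnit ((p-1 : ℕ) : ZMod (p^(t+2))) := by
    exact (ZMod.isUnit_iff_coprime (p-1) (p^(t+2))).mpr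
      (Nat.Coprime.pow_right _ (coprime_pred p hp))
  exact hmu.mul_left_cancel hcomb

theorem stmt_11 (p n t s : ℕ) (hp : p.Prime) (hp3 : 3 < p)
    (hs : s = 1 + n * (p - 1) * p^t) :
    (p : ℤ)^(t + 2) ∣ (∑ j ∈ (Finset.range (s + 1)).filter
        (fun j => j % (p - 1) = 1 % (p - 1)), (s.choose j : ℤ))
      - (1 + (n : ℤ) * (p : ℤ)^(t + 1)) := by
  subst hs
  have h := main_zmod p n t hp hp3
  have hcast : ((((∑ j ∈ (Finset.range (1 + n * (p - 1) * p^t + 1)).filter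
        (fun j => j % (p - 1) = 1 % (p - 1)), ((1 + n * (p - 1) * p^t).choose j : ℤ))
      - (1 + (n : ℤ) * (p : ℤ)^(t + 1))) : ℤ) : ZMod (p^(t+2))) = 0 := by
    push_cast
    rw [h]
    ring
  have hdvd := (ZMod.intCast_zmod_eq_zero_iff_dvd _ _).mp hcast
  have hps : ((p^(t+2) : ℕ) : ℤ) = (p:ℤ)^(t+2) := by push_cast; ring
  rwa [hps] at hdvd
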